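/- For all n ≥ 0 and all real x, y, ρ, q: H_n(x|q) = ∑_{i=0}^n [n choose i]_q ρ^{n-i} H_{n-i}(y|q) P_i(x|y,ρ,q), expressing q-Hermite polynomials in terms of Al-Salam–Chihara polynomials. -/
import Mathlib


noncomputable def qint (q : ℝ) (n : ℕ) : ℝ := ∑ i ∈ Finset.range n, q ^ i

noncomputable def qfact (q : ℝ) (n : ℕ) : ℝ := ∏ i ∈ Finset.range n, qint q (i + 1)

noncomputable def qPoch (a q : ℝ) (n : ℕ) : ℝ := ∏ i ∈ Finset.range n, (1 - a * q ^ i)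

/-- Gaussian binomial coefficient as a polynomial in `q`, via the Pascal-type recurrence. -/
noncomputable def qbinom (q : ℝ) : ℕ → ℕ → ℝ
  | _, 0 => 1
  | 0, _ + 1 => 0
  | n + 1, k + 1 => qbinom q n k + q ^ (k + 1) * qbinom q n (k + 1)

/-- Rescaled continuous q-Hermite polynomials `H_n(x|q)`. -/
noncomputable def qHermite (q x : ℝ) : ℕ → ℝ
  | 0 => 1
  | 1 => x
  | n + 2 => x * qHermite q x (n + 1) - qint q (n + 1) * qHermite q x n

/-- Chebyshev polynomials of the second kind. -/
noncomputable def Ucheb (x : ℝ) : ℕ → ℝ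
  | 0 => 1
  | 1 => 2 * x
  | n + 2 => 2 * x * Ucheb x (n + 1) - Ucheb x n

/-- Probabilist's Hermite polynomials. -/
noncomputable def He (x : ℝ) : ℕ → ℝ
  | 0 => 1
  | 1 => x
  | n + 2 => x * He x (n + 1) - (n + 1 : ℝ) * He x n

/-- Big q-Hermite polynomials `H_n(x|a,q)`. -/
noncomputable def bigH (q a x : ℝ) (n : ℕ) : ℝ :=
  ∑ i ∈ Finset.range (n + 1),
    qbinom q n i * q ^ (i.choose 2) * (-a) ^ i * qHermite q x (n - i)

/-- Al-Salam--Chihara polynomials `P_n(x|y,ρ,q)`. -/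
noncomputable def ASC (q x y ρ : ℝ) : ℕ → ℝ
  | 0 => 1
  | 1 => x - ρ * y
  | n + 2 =>
      (x - ρ * y * q ^ (n + 1)) * ASC q x y ρ (n + 1)
        - qint q (n + 1) * (1 - ρ ^ 2 * q ^ n) * ASC q x y ρ n

/-- Auxiliary polynomials `B_n(x|q)`. -/
noncomputable def Bpoly (q x : ℝ) : ℕ → ℝ
  | 0 => 1
  | 1 => -x
  | n + 2 => -q ^ (n + 1) * x * Bpoly q x (n + 1) + q ^ n * qint q (n + 1) * Bpoly q x n

lemma qint_zero (q : ℝ) : qint q 0 = 0 := by simp [qint]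

lemma qint_succ (q : ℝ) (n : ℕ) : qint q (n+1) = qint q n + q^n := by
  simp [qint, Finset.sum_range_succ]

lemma qint_add (q : ℝ) (a b : ℕ) : qint q (a+b) = qint q a + q^a * qint q b := by
  simp [qint, Finset.sum_range_add, Finset.mul_sum, pow_add]

lemma qbinom_zero_right (q : ℝ) (n : ℕ) : qbinom q n 0 = 1 := by cases n <;> rfl

lemma qbinom_succ_succ (q : ℝ) (n k : ℕ) :
    qbinom q (n+1) (k+1) = qbinom q n k + q^(k+1) * qbinom q n (k+1) := rfl

lemma qbinom_of_lt (q : ℝ) : ∀ n k : ℕ, n < k → qbinom q n k = 0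
  | 0, _+1, _ => rfl
  | n+1, k+1, h => by
      rw [qbinom_succ_succ, qbinom_of_lt q n k (by omega), qbinom_of_lt q n (k+1) (by omega)]
      ring

lemma qbinom_AB (q : ℝ) : ∀ n i : ℕ,
    qint q (i+1) * qbinom q (n+1) (i+1) = qint q (n+1) * qbinom q n i ∧
    qint q (n+1-i) * qbinom q (n+1) i = qint q (n+1) * qbinom q n i := by
  intro n
  induction n with
  | zero =>
    intro i
    rcases i with _ | _ | j
    · constructor <;> norm_num [qbinom, qint, Finset.sum_range_succ]
    · constructor
      · rw [qbinom_of_lt q 1 2 (by omega), qbinom_of_lt q 0 1 (by omega)]; ring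
      · rw [qbinom_of_lt q 0 1 (by omega)]
        norm_num [qint_zero]
    · constructor
      · rw [qbinom_of_lt q 1 (j+3) (by omega), qbinom_of_lt q 0 (j+2) (by omega)]; ring
      · rw [qbinom_of_lt q 1 (j+2) (by omega), qbinom_of_lt q 0 (j+2) (by omega)]; ring
  | succ n ih =>
    intro i
    constructor
    · by_cases hi : i ≤ n+1
      · have hA := (ih i).1
        have hB := (ih i).2
        have hadd : qint q (n+1+1) = qint q (i+1) + q^(i+1) * qint q (n+1-i) := by
          rw [← qint_add]
          congr 1
          omega
        have hP : qbinom q (n+1+1) (i+1)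
            = qbinom q (n+1) i + q^(i+1) * qbinom q (n+1) (i+1) := qbinom_succ_succ q (n+1) i
        rw [hadd, hP]
        linear_combination q^(i+1) * hA - q^(i+1) * hB
      · rw [qbinom_of_lt q (n+1+1) (i+1) (by omega), qbinom_of_lt q (n+1) i (by omega)]
        ring
    · rcases i with _ | k
      · rw [qbinom_zero_right, qbinom_zero_right]
        norm_num
      · by_cases hk : k ≤ n
        · have hBk := (ih k).2
          have hBk1 := (ih (k+1)).2
          rw [show n+1-(k+1) = n-k from by omega] at hBk1
          have h1 : qint q (n+1-k) = qint q (n-k) + q^(n-k) := by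
            rw [show n+1-k = (n-k)+1 from by omega, qint_succ]
          have h2 : qint q (n+1+1) = qint q (n+1) + q^(n+1) := qint_succ q (n+1)
          have h3 : qbinom q (n+1) (k+1) = qbinom q n k + q^(k+1) * qbinom q n (k+1) :=
            qbinom_succ_succ q n k
          have h4 : q^(n-k) * q^(k+1) = q^(n+1) := by
            rw [← pow_add]; congr 1; omega
          have hP : qbinom q (n+1+1) (k+1)
              = qbinom q (n+1) k + q^(k+1) * qbinom q (n+1) (k+1) := qbinom_succ_succ q (n+1) k
          rw [show n+1+1-(k+1) = n+1-k from by omega, hP]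
          linear_combination hBk + (q^(k+1) * qbinom q (n+1) (k+1)) * h1 + q^(k+1) * hBk1
            + qbinom q (n+1) (k+1) * h4 - qint q (n+1) * h3 - qbinom q (n+1) (k+1) * h2
        · rcases eq_or_lt_of_le (show n+1 ≤ k from by omega) with hk2 | hk2
          · subst hk2
            rw [show n+1+1-(n+1+1) = 0 from by omega, qint_zero,
              qbinom_of_lt q (n+1) (n+1+1) (by omega)]
            ring
          · rw [qbinom_of_lt q (n+1+1) (k+1) (by omega), qbinom_of_lt q (n+1) (k+1) (by omega)]
            ring

lemma yH (q y : ℝ) : ∀ m : ℕ, y * qHermite q y m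
    = qHermite q y (m+1) + qint q m * qHermite q y (m-1)
  | 0 => by
    rw [show qHermite q y 1 = y from rfl, show qHermite q y 0 = 1 from rfl, qint_zero]
    ring
  | m+1 => by
    rw [show qHermite q y (m+1+1) = y * qHermite q y (m+1) - qint q (m+1) * qHermite q y m
      from rfl, Nat.add_sub_cancel]
    ring

lemma xASC (q x y ρ : ℝ) : ∀ i : ℕ, x * ASC q x y ρ i
    = ASC q x y ρ (i+1) + ρ*y*q^i * ASC q x y ρ i
      + qint q i * (1 - ρ^2 * q^(i-1)) * ASC q x y ρ (i-1)
  | 0 => by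
    rw [show ASC q x y ρ 1 = x - ρ * y from rfl, show ASC q x y ρ 0 = 1 from rfl, qint_zero]
    ring
  | i+1 => by
    rw [show ASC q x y ρ (i+1+1) = (x - ρ * y * q ^ (i + 1)) * ASC q x y ρ (i + 1)
        - qint q (i + 1) * (1 - ρ ^ 2 * q ^ i) * ASC q x y ρ i from rfl,
      Nat.add_sub_cancel]
    ring

noncomputable def Tq (q x y ρ : ℝ) (n i : ℕ) : ℝ :=
  qbinom q n i * ρ^(n-i) * qHermite q y (n-i) * ASC q x y ρ i

noncomputable def Apq (q x y ρ : ℝ) (n i : ℕ) : ℝ :=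
  qbinom q (n+1) i * ρ^(n+1-i) * qHermite q y (n+1-i) * ASC q x y ρ (i+1)

noncomputable def Maq (q x y ρ : ℝ) (n i : ℕ) : ℝ :=
  q^i * qbinom q (n+1) i * ρ^((n+1-i)+1) * qHermite q y ((n+1-i)+1) * ASC q x y ρ i

noncomputable def Mbq (q x y ρ : ℝ) (n i : ℕ) : ℝ :=
  q^i * qbinom q (n+1) i * qint q (n+1-i) * ρ^((n+1-i)+1)
    * qHermite q y ((n+1-i)-1) * ASC q x y ρ i

noncomputable def Cpq (q x y ρ : ℝ) (n i : ℕ) : ℝ :=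
  qbinom q (n+1) i * ρ^(n+1-i) * qHermite q y (n+1-i) * qint q i
    * (1 - ρ^2*q^(i-1)) * ASC q x y ρ (i-1)

lemma hx (q x y ρ : ℝ) (n i : ℕ) :
    x * Tq q x y ρ (n+1) i
      = Apq q x y ρ n i + Maq q x y ρ n i + Mbq q x y ρ n i + Cpq q x y ρ n i := by
  have h1 := xASC q x y ρ i
  have h2 := yH q y (n+1-i)
  simp only [Tq, Apq, Maq, Mbq, Cpq]
  linear_combination (qbinom q (n+1) i * ρ^(n+1-i) * qHermite q y (n+1-i)) * h1
    + (q^i * qbinom q (n+1) i * ρ^(n+1-i) * ρ * ASC q x y ρ i) * h2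

lemma termwise (q x y ρ : ℝ) (n i : ℕ) (hi : i ≤ n+1) :
    Tq q x y ρ (n+2) (i+1)
      = Apq q x y ρ n i + Maq q x y ρ n (i+1) + Mbq q x y ρ n i + Cpq q x y ρ n (i+1)
        - qint q (n+1) * Tq q x y ρ n i := by
  rcases Nat.lt_or_ge i (n+1) with hlt | hge
  · obtain ⟨d, rfl⟩ : ∃ d, n = i + d := ⟨n - i, by omega⟩
    have hA := (qbinom_AB q (i+d) i).1
    have hB := (qbinom_AB q (i+d) i).2
    rw [show i+d+1-i = d+1 from by omega] at hB
    have hP : qbinom q (i+d+2) (i+1)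
        = qbinom q (i+d+1) i + q^(i+1) * qbinom q (i+d+1) (i+1) := qbinom_succ_succ q (i+d+1) i
    simp only [Tq, Apq, Maq, Mbq, Cpq,
      show i+d+2-(i+1) = d+1 from by omega,
      show i+d+1-i = d+1 from by omega,
      show i+d+1-(i+1) = d from by omega,
      show i+d-i = d from by omega,
      Nat.add_sub_cancel]
    rw [hP]
    linear_combination (-(ρ^d * qHermite q y d * ASC q x y ρ i)) *
      ((q^i*ρ^2) * hB + (1 - ρ^2*q^i) * hA)
  · obtain rfl : i = n+1 := by omega
    simp only [Tq, Apq, Maq, Mbq, Cpq,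
      show n+2-(n+1+1) = 0 from by omega,
      show n+1-(n+1) = 0 from by omega,
      show n+1-(n+1+1) = 0 from by omega,
      show n-(n+1) = 0 from by omega,
      qint_zero, qbinom_of_lt q (n+1) (n+1+1) (by omega), qbinom_of_lt q n (n+1) (by omega)]
    rw [show qbinom q (n+2) (n+1+1)
        = qbinom q (n+1) (n+1) + q^(n+2)*qbinom q (n+1) (n+2) from
        qbinom_succ_succ q (n+1) (n+1),
      qbinom_of_lt q (n+1) (n+2) (by omega)]
    ring

lemma Srec (q x y ρ : ℝ) (n : ℕ) :
    (∑ i ∈ Finset.range (n+2+1), Tq q x y ρ (n+2) i)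
      = x * (∑ i ∈ Finset.range (n+1+1), Tq q x y ρ (n+1) i)
        - qint q (n+1) * (∑ i ∈ Finset.range (n+1), Tq q x y ρ n i) := by
  have A1 : (∑ i ∈ Finset.range (n+2+1), Tq q x y ρ (n+2) i)
      = Tq q x y ρ (n+2) 0 + ∑ i ∈ Finset.range (n+2), Tq q x y ρ (n+2) (i+1) := by
    rw [Finset.sum_range_succ' (fun i => Tq q x y ρ (n+2) i) (n+2)]
    ring
  have A2 : (∑ i ∈ Finset.range (n+2), Tq q x y ρ (n+2) (i+1))
      = (∑ i ∈ Finset.range (n+2),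
          (Apq q x y ρ n i + Maq q x y ρ n (i+1) + Mbq q x y ρ n i + Cpq q x y ρ n (i+1)))
        - ∑ i ∈ Finset.range (n+2), qint q (n+1) * Tq q x y ρ n i := by
    rw [← Finset.sum_sub_distrib]
    refine Finset.sum_congr rfl fun i hi => ?_
    have hi' : i ≤ n+1 := by have := Finset.mem_range.mp hi; omega
    rw [termwise q x y ρ n i hi']
  have eMa : (∑ i ∈ Finset.range (n+2), Maq q x y ρ n (i+1))
      = (∑ i ∈ Finset.range (n+2), Maq q x y ρ n i) - Maq q x y ρ n 0 := by
    rw [Finset.sum_range_succ' (fun i => Maq q x y ρ n i) (n+1),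
      Finset.sum_range_succ (fun i => Maq q x y ρ n (i+1)) (n+1),
      show Maq q x y ρ n (n+2) = 0 from by
        simp [Maq, qbinom_of_lt q (n+1) (n+2) (by omega)]]
    ring
  have eCp : (∑ i ∈ Finset.range (n+2), Cpq q x y ρ n (i+1))
      = ∑ i ∈ Finset.range (n+2), Cpq q x y ρ n i := by
    rw [Finset.sum_range_succ' (fun i => Cpq q x y ρ n i) (n+1),
      Finset.sum_range_succ (fun i => Cpq q x y ρ n (i+1)) (n+1),
      show Cpq q x y ρ n (n+2) = 0 from by
        simp [Cpq, qbinom_of_lt q (n+1) (n+2) (by omega)],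
      show Cpq q x y ρ n 0 = 0 from by simp [Cpq, qint_zero]]
  have eT : (∑ i ∈ Finset.range (n+2),
        (Apq q x y ρ n i + Maq q x y ρ n (i+1) + Mbq q x y ρ n i + Cpq q x y ρ n (i+1)))
      = (∑ i ∈ Finset.range (n+2),
          (Apq q x y ρ n i + Maq q x y ρ n i + Mbq q x y ρ n i + Cpq q x y ρ n i))
        - Maq q x y ρ n 0 := by
    simp only [Finset.sum_add_distrib]
    rw [eMa, eCp]
    ring
  have eX : (∑ i ∈ Finset.range (n+1+1), x * Tq q x y ρ (n+1) i)
      = ∑ i ∈ Finset.range (n+2),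
          (Apq q x y ρ n i + Maq q x y ρ n i + Mbq q x y ρ n i + Cpq q x y ρ n i) :=
    Finset.sum_congr rfl fun i _ => hx q x y ρ n i
  have hmul : x * (∑ i ∈ Finset.range (n+1+1), Tq q x y ρ (n+1) i)
      = ∑ i ∈ Finset.range (n+1+1), x * Tq q x y ρ (n+1) i := Finset.mul_sum _ _ _
  have e5 : Tq q x y ρ (n+2) 0 = Maq q x y ρ n 0 := by
    simp [Tq, Maq, qbinom_zero_right]
  have e7 : qint q (n+1) * (∑ i ∈ Finset.range (n+1), Tq q x y ρ n i)
      = ∑ i ∈ Finset.range (n+2), qint q (n+1) * Tq q x y ρ n i := by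
    rw [Finset.sum_range_succ (fun i => qint q (n+1) * Tq q x y ρ n i) (n+1),
      show Tq q x y ρ n (n+1) = 0 from by
        simp [Tq, qbinom_of_lt q n (n+1) (by omega)],
      Finset.mul_sum]
    ring
  linear_combination A1 + A2 + eT + e5 - hmul - eX + e7

theorem qHermite_eq_sum_H_ASC (q x y ρ : ℝ) (n : ℕ) :
    qHermite q x n =
      ∑ i ∈ Finset.range (n + 1),
        qbinom q n i * ρ ^ (n - i) * qHermite q y (n - i) * ASC q x y ρ i := by
  have key : ∀ m : ℕ, qHermite q x m = ∑ i ∈ Finset.range (m+1), Tq q x y ρ m i := by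
    intro m
    induction m using Nat.twoStepInduction with
    | zero => simp [Tq, qHermite, qbinom_zero_right, ASC]
    | one =>
      rw [Finset.sum_range_succ, Finset.sum_range_succ, Finset.sum_range_zero]
      simp only [Tq]
      rw [show qHermite q x 1 = x from rfl, show qHermite q y 1 = y from rfl,
        show qHermite q y 0 = 1 from rfl, show ASC q x y ρ 0 = 1 from rfl,
        show ASC q x y ρ 1 = x - ρ*y from rfl, qbinom_zero_right,
        show qbinom q 1 1 = 1 from by norm_num [qbinom]]
      norm_num
    | more m ih1 ih2 =>
      rw [show qHermite q x (m+2)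
          = x * qHermite q x (m+1) - qint q (m+1) * qHermite q x m from rfl,
        ih1, ih2, Srec q x y ρ m]
  simpa only [Tq] using key n
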